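/- Let s_n be defined by s₁ = 0 and s_{n+1} − s_n = μ e^{−s_{n+1}} for a constant μ > 0 (each s_{n+1} being the unique solution of this implicit equation exceeding s_n). Then s_n < log(μn + e^{−μ}) for all n ≥ 1. -/

import Mathlib

/-- Upper bound for the implicit sequence `s₁ = 0`, `s_{n+1} − s_n = μe^{−s_{n+1}}`:
`s_n < log(μn + e^{−μ})` for all `n ≥ 1`. -/
theorem stmt12 (μ : ℝ) (hμ : 0 < μ) (s : ℕ → ℝ)
    (hs1 : s 1 = 0)
    (hrec : ∀ n : ℕ, 1 ≤ n → s (n+1) - s n = μ * Real.exp (-(s (n+1)))) :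
    ∀ n : ℕ, 1 ≤ n → s n < Real.log (μ * n + Real.exp (-μ)) := by
  have hexp : Real.exp (-μ) > 1 - μ := by
    have := Real.add_one_lt_exp (x := -μ) (by linarith)
    linarith
  have hapos : ∀ n : ℕ, 1 ≤ n → (0:ℝ) < μ * n + Real.exp (-μ) := by
    intro n hn
    have : (1:ℝ) ≤ (n:ℝ) := by exact_mod_cast hn
    nlinarith [Real.exp_pos (-μ)]
  intro n hn
  induction n with
  | zero => omega
  | succ m ih =>
    rcases Nat.eq_or_lt_of_le hn with h1 | h1
    · -- m + 1 = 1
      have hm : m = 0 := by omega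
      subst hm
      rw [hs1]
      apply Real.log_pos
      push_cast
      nlinarith
    · have hm : 1 ≤ m := by omega
      have ihm := ih hm
      set a := μ * m + Real.exp (-μ) with ha
      set b := μ * (m+1 : ℕ) + Real.exp (-μ) with hb
      have hba : b = a + μ := by push_cast [ha, hb]; ring
      have hapos' : 0 < a := hapos m hm
      have hbpos : 0 < b := hapos (m+1) (by omega)
      -- key: log b - log a > μ / b, i.e. μ * exp (-log b)
      have key : Real.log b - Real.log a > μ * Real.exp (-Real.log b) := by
        rw [Real.exp_neg, Real.exp_log hbpos]
        have h1 : Real.exp (-(μ/b)) > 1 - μ/b := by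
          have := Real.add_one_lt_exp (x := -(μ/b)) (neg_ne_zero.2 (ne_of_gt (div_pos hμ hbpos)))
          linarith
        have h2 : (1 : ℝ) - μ/b = a / b := by field_simp [hba]; linarith
        have h3 : Real.log (a/b) < -(μ/b) := by
          have := Real.log_lt_log (by rw [h2] at h1; linarith [div_pos hapos' hbpos] ) h1
          rw [h2] at this; rwa [Real.log_exp] at this
        rw [Real.log_div (ne_of_gt hapos') (ne_of_gt hbpos)] at h3
        have : μ * b⁻¹ = μ / b := by ring
        linarith
      by_contra hcon
      push_neg at hcon
      -- hcon : log b ≤ s (m+1)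
      have hmono : Real.exp (-(s (m+1))) ≤ Real.exp (-Real.log b) :=
        Real.exp_le_exp.2 (by linarith)
      have hr := hrec m hm
      have : Real.log b - μ * Real.exp (-Real.log b) ≤ s (m+1) - μ * Real.exp (-(s (m+1))) := by
        nlinarith
      rw [← hr] at this
      -- so s m ≥ log b - μ exp(-log b) > log a, contradicting ihm
      nlinarith
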